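/- For every (x,t) ∈ ℋ with (x,t) ≠ (0,0), the homogeneous norm satisfies ‖R(x,t)‖ = 1/‖(x,t)‖. -/

import Mathlib

open scoped BigOperators
open Matrix

noncomputable section

namespace OC

/-- Octonions, identified with ℝ⁸. -/
abbrev Octo : Type := Fin 8 → ℝ

/-- The seven positively-oriented triples Ω. -/
def OmegaT : List (Fin 8 × Fin 8 × Fin 8) :=
  [(1,2,3),(2,4,6),(4,3,5),(3,6,7),(6,5,1),(5,7,2),(7,1,4)]

/-- The six permutations of a triple, with their signs. -/
def signedPerms3 (t : Fin 8 × Fin 8 × Fin 8) : List (ℝ × (Fin 8 × Fin 8 × Fin 8)) :=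
  [(1,(t.1,t.2.1,t.2.2)), (1,(t.2.1,t.2.2,t.1)), (1,(t.2.2,t.1,t.2.1)),
   (-1,(t.2.1,t.1,t.2.2)), (-1,(t.1,t.2.2,t.2.1)), (-1,(t.2.2,t.2.1,t.1))]

/-- The totally antisymmetric symbol ε with ε(α,β,γ) = 1 on Ω and vanishing on triples
that are not permutations of a triple of Ω. -/
def eps (a b c : Fin 8) : ℝ :=
  (((OmegaT.map signedPerms3).flatten).map (fun p => if p.2 = (a,b,c) then p.1 else 0)).sum

/-- Coefficient of `e d` in the product `e a * e b`: `e 0` is a two-sided unit and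
`e α * e β = -δ_{αβ} e 0 + ∑ γ, ε(α,β,γ) e γ` for imaginary indices. -/
def mulCoef (a b d : Fin 8) : ℝ :=
  if a = 0 then (if d = b then 1 else 0)
  else if b = 0 then (if d = a then 1 else 0)
  else (if a = b ∧ d = 0 then -1 else 0) + eps a b d

/-- Octonion multiplication on ℝ⁸. -/
def omul (x y : Octo) : Octo := fun d => ∑ a, ∑ b, x a * y b * mulCoef a b d

/-- The standard basis octonions e₀,…,e₇. -/
def e (a : Fin 8) : Octo := fun d => if d = a then 1 else 0

/-- Real part. -/
def reO (x : Octo) : ℝ := x 0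

/-- Imaginary part. -/
def imO (x : Octo) : Octo := fun d => if d = 0 then 0 else x d

/-- Octonion conjugation. -/
def conjO (x : Octo) : Octo := fun d => if d = 0 then x 0 else -x d

/-- Squared Euclidean norm |x|². -/
def normSq (x : Octo) : ℝ := ∑ a, (x a)^2

/-- Inverse of a nonzero octonion, q⁻¹ = q̄ / |q|². -/
def oinv (q : Octo) : Octo := (normSq q)⁻¹ • conjO q

/-- The seven quadruples Λ. -/
def LambdaT : List (Fin 8 × Fin 8 × Fin 8 × Fin 8) :=
  [(5,4,6,7),(7,3,5,1),(1,6,7,2),(2,5,1,4),(4,7,2,3),(3,1,4,6),(6,2,5,3)]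

/-- The 24 permutations of a quadruple, with their signs. -/
def signedPerms4 (t : Fin 8 × Fin 8 × Fin 8 × Fin 8) :
    List (ℝ × (Fin 8 × Fin 8 × Fin 8 × Fin 8)) :=
  let a := t.1; let b := t.2.1; let c := t.2.2.1; let d := t.2.2.2
  [ (1,(a,b,c,d)), (-1,(a,b,d,c)), (-1,(a,c,b,d)), (1,(a,c,d,b)), (1,(a,d,b,c)), (-1,(a,d,c,b)),
    (-1,(b,a,c,d)), (1,(b,a,d,c)), (1,(b,c,a,d)), (-1,(b,c,d,a)), (-1,(b,d,a,c)), (1,(b,d,c,a)),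
    (1,(c,a,b,d)), (-1,(c,a,d,b)), (-1,(c,b,a,d)), (1,(c,b,d,a)), (1,(c,d,a,b)), (-1,(c,d,b,a)),
    (-1,(d,a,b,c)), (1,(d,a,c,b)), (1,(d,b,a,c)), (-1,(d,b,c,a)), (-1,(d,c,a,b)), (1,(d,c,b,a)) ]

/-- The totally antisymmetric symbol ε₄ with value 1 on Λ and vanishing on quadruples
that are not permutations of a quadruple of Λ. -/
def eps4 (a b c d : Fin 8) : ℝ :=
  (((LambdaT.map signedPerms4).flatten).map (fun p => if p.2 = (a,b,c,d) then p.1 else 0)).sum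

/-- Matrix of left multiplication by `e a`: `(Imat a) d c` is the coefficient of `e d` in
`e a * e c`. -/
def Imat (a : Fin 8) : Matrix (Fin 8) (Fin 8) ℝ := Matrix.of fun d c => mulCoef a c d

/-- Octonionic Heisenberg group multiplication on 𝕆 × Im 𝕆 (realized inside 𝕆 × 𝕆):
`(x,t)·(y,s) = (x+y, t+s+2 Im(x ȳ))`. -/
def hmul (p q : Octo × Octo) : Octo × Octo :=
  (p.1 + q.1, p.2 + q.2 + (2:ℝ) • imO (omul p.1 (conjO q.1)))

/-- Group inverse in the octonionic Heisenberg group. -/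
def hinv (p : Octo × Octo) : Octo × Octo := (-p.1, -p.2)

/-- Homogeneous norm ‖(x,t)‖ = (|x|⁴+|t|²)^{1/4}. -/
def hnorm (p : Octo × Octo) : ℝ := ((normSq p.1)^2 + normSq p.2) ^ ((1:ℝ)/4)

/-- The inversion R(x,t) = (−((|x|²e₀ − t)⁻¹)x, −t/(|x|⁴+|t|²)). -/
def Rmap (p : Octo × Octo) : Octo × Octo :=
  (-(omul (oinv (normSq p.1 • e 0 - p.2)) p.1),
   -(((normSq p.1)^2 + normSq p.2)⁻¹ • p.2))

/-- E^β = I_β for β ∈ {1,…,7}, indexed here by `Fin 7` via `β ↦ β+1`. -/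
def E7 (β : Fin 7) : Matrix (Fin 8) (Fin 8) ℝ := Imat β.succ

/-- Octonionic Heisenberg group multiplication in ℝ⁸ × ℝ⁷ coordinates. -/
def hmulC (p q : (Fin 8 → ℝ) × (Fin 7 → ℝ)) : (Fin 8 → ℝ) × (Fin 7 → ℝ) :=
  (p.1 + q.1, fun β => p.2 β + q.2 β + 2 * ∑ a, ∑ b, E7 β a b * p.1 a * q.1 b)

/-- The left-invariant horizontal vector fields
`X_a = ∂/∂x_a + 2 ∑_{β,b} (E^β)_{ba} x_b ∂/∂t_β`. -/
def Xop (a : Fin 8) (f : ((Fin 8 → ℝ) × (Fin 7 → ℝ)) → ℝ)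
    (p : (Fin 8 → ℝ) × (Fin 7 → ℝ)) : ℝ :=
  fderiv ℝ f p ((Pi.single a 1 : Fin 8 → ℝ), (0 : Fin 7 → ℝ))
    + 2 * ∑ β : Fin 7, ∑ b : Fin 8,
        E7 β b a * p.1 b * fderiv ℝ f p ((0 : Fin 8 → ℝ), (Pi.single β 1 : Fin 7 → ℝ))

/-- ρ(x,t) = |x|⁴ + |t|². -/
def rho (p : (Fin 8 → ℝ) × (Fin 7 → ℝ)) : ℝ :=
  (∑ a, (p.1 a)^2)^2 + ∑ β, (p.2 β)^2


lemma normSq_nonneg' (z : Octo) : 0 ≤ normSq z :=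
  Finset.sum_nonneg fun a _ => sq_nonneg (z a)

lemma normSq_eq_zero' {z : Octo} : normSq z = 0 ↔ z = 0 := by
  constructor
  · intro h
    funext a
    have := (Finset.sum_eq_zero_iff_of_nonneg (fun i _ => sq_nonneg (z i))).1 h a
      (Finset.mem_univ a)
    exact pow_eq_zero_iff two_ne_zero |>.mp this
  · intro h; subst h; simp [normSq]

lemma normSq_neg' (z : Octo) : normSq (-z) = normSq z := by
  simp [normSq]

lemma normSq_smul' (c : ℝ) (z : Octo) : normSq (c • z) = c^2 * normSq z := by
  simp only [normSq, Pi.smul_apply, smul_eq_mul, mul_pow, Finset.mul_sum]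

lemma normSq_conjO' (z : Octo) : normSq (conjO z) = normSq z := by
  simp only [normSq, conjO, Fin.sum_univ_eight]
  simp (config := { decide := true }) []

set_option maxHeartbeats 4000000 in
set_option maxRecDepth 100000 in
lemma normSq_omul' (x y : Octo) : normSq (omul x y) = normSq x * normSq y := by
  simp only [normSq, omul, Fin.sum_univ_eight]
  simp (config := { decide := true, maxSteps := 100000000 })
    [mulCoef, eps, OmegaT, signedPerms3]
  ring

lemma normSq_oinv' (z : Octo) : normSq (oinv z) = (normSq z)⁻¹ := by
  rw [oinv, normSq_smul', normSq_conjO']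
  rcases eq_or_ne (normSq z) 0 with h | h
  · simp [h]
  · field_simp

/-- ‖R(x,t)‖ = 1/‖(x,t)‖ for (x,t) ≠ (0,0). -/
theorem hnorm_Rmap (p : Octo × Octo) (hp : p ≠ 0) (him : p.2 0 = 0) :
    hnorm (Rmap p) = (hnorm p)⁻¹ := by
  have him' : p.2 0 = 0 := him
  set x := p.1 with hx
  set t := p.2 with ht
  have hρ : 0 < (normSq x)^2 + normSq t := by
    rcases eq_or_ne x 0 with h1 | h1
    · have h2 : t ≠ 0 := by
        intro h2
        exact hp (Prod.ext h1 h2)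
      have : normSq t ≠ 0 := fun h => h2 (normSq_eq_zero'.1 h)
      have := lt_of_le_of_ne (normSq_nonneg' t) (Ne.symm this)
      nlinarith [sq_nonneg (normSq x)]
    · have : normSq x ≠ 0 := fun h => h1 (normSq_eq_zero'.1 h)
      have := lt_of_le_of_ne (normSq_nonneg' x) (Ne.symm this)
      nlinarith [normSq_nonneg' t]
  have hqn : normSq (normSq x • e 0 - t) = (normSq x)^2 + normSq t := by
    simp only [normSq, Pi.sub_apply, Pi.smul_apply, smul_eq_mul, e,
      Fin.sum_univ_eight]
    simp (config := { decide := true }) [him']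
    ring
  have h1 : normSq (Rmap p).1 = ((normSq x)^2 + normSq t)⁻¹ * normSq x := by
    show normSq (-(omul (oinv (normSq x • e 0 - t)) x)) = _
    rw [normSq_neg', normSq_omul', normSq_oinv', hqn]
  have h2 : normSq (Rmap p).2 = (((normSq x)^2 + normSq t)⁻¹)^2 * normSq t := by
    show normSq (-((((normSq x)^2 + normSq t)⁻¹) • t)) = _
    rw [normSq_neg', normSq_smul']
  have key : (normSq (Rmap p).1)^2 + normSq (Rmap p).2
      = (((normSq x)^2 + normSq t))⁻¹ := by
    rw [h1, h2]
    field_simp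
  rw [hnorm, key, hnorm, ← hx, ← ht, Real.inv_rpow hρ.le]


end OC
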